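/- Let (X,r) be a finite quantum binomial set with |X| = n. Then the total number of D-orbits in X³ is at most C(n+2,3) = n(n+1)(n+2)/6, and equality holds if and only if (X,r) is a symmetric set, i.e. r satisfies the braid relation r¹² ∘ r²³ ∘ r¹² = r²³ ∘ r¹² ∘ r²³ on X³. (The number of D-orbits in X³ equals the dimension of the degree-3 component of the monoid algebra of the monoid S(X,r) associated with (X,r).) -/

import Mathlib

open Function

/-- The map r¹² = r × id acting on X³ (realized as `X × X × X`). -/
def r12 {X : Type*} (r : X × X → X × X) : X × X × X → X × X × X :=
  fun p => ((r (p.1, p.2.1)).1, (r (p.1, p.2.1)).2, p.2.2)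

/-- The map r²³ = id × r acting on X³. -/
def r23 {X : Type*} (r : X × X → X × X) : X × X × X → X × X × X :=
  fun p => (p.1, (r (p.2.1, p.2.2)).1, (r (p.2.1, p.2.2)).2)

/-- One step of the action of the group D(r) generated by r¹² and r²³. -/
def dStep {X : Type*} (r : X × X → X × X) (a b : X × X × X) : Prop :=
  r12 r a = b ∨ r23 r a = b

/-- `O` is an orbit of the group D(r) = ⟨r¹², r²³⟩ acting on X³. -/
def IsDOrbit {X : Type*} (r : X × X → X × X) (O : Set (X × X × X)) : Prop :=
  ∃ a, O = {b | Relation.EqvGen (dStep r) a b}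

/-- `(X,r)` is a quantum binomial set: `r` is involutive, nondegenerate
(left and right actions are bijective) and square-free. -/
def IsQuantumBinomial {X : Type*} (r : X × X → X × X) : Prop :=
  Function.Involutive r ∧
  (∀ x : X, Function.Bijective (fun y => (r (x, y)).1)) ∧
  (∀ x : X, Function.Bijective (fun y => (r (y, x)).2)) ∧
  (∀ x : X, r (x, x) = (x, x))

/-- The subset Δ₂ × X of X³. -/
def Diag2X {X : Type*} : Set (X × X × X) := {p | p.1 = p.2.1}

/-- The subset X × Δ₂ of X³. -/
def XDiag2 {X : Type*} : Set (X × X × X) := {p | p.2.1 = p.2.2}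

/-- The diagonal Δ₃ of X³. -/
def Diag3 {X : Type*} : Set (X × X × X) := {p | p.1 = p.2.1 ∧ p.2.1 = p.2.2}

/-- `(X,r)` is braided: the braid relation r¹²r²³r¹² = r²³r¹²r²³ holds on X³. -/
def IsBraided {X : Type*} (r : X × X → X × X) : Prop :=
  (r12 r) ∘ (r23 r) ∘ (r12 r) = (r23 r) ∘ (r12 r) ∘ (r23 r)

namespace QBSAux

variable {Y : Type*}

/-- symmetric step relation generated by two maps -/
def srel (f g : Y → Y) : Y → Y → Prop :=
  Relation.EqvGen (fun a b => f a = b ∨ g a = b)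

theorem srel_equiv (f g : Y → Y) : Equivalence (srel f g) :=
  Relation.EqvGen.is_equivalence _

theorem srel_comm {f g : Y → Y} {a b : Y} : srel f g a b ↔ srel g f a b :=
  ⟨fun h => Relation.EqvGen.mono (fun _ _ h => h.symm) _ _ h, fun h => Relation.EqvGen.mono (fun _ _ h => h.symm) _ _ h⟩

theorem srel_f {f g : Y → Y} {a b : Y} (h : srel f g a b) : srel f g a (f b) :=
  Relation.EqvGen.trans _ _ _ h (Relation.EqvGen.rel _ _ (Or.inl rfl))

theorem srel_g {f g : Y → Y} {a b : Y} (h : srel f g a b) : srel f g a (g b) :=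
  Relation.EqvGen.trans _ _ _ h (Relation.EqvGen.rel _ _ (Or.inr rfl))

theorem srel_closed {f g : Y → Y} (hf : Involutive f) (hg : Involutive g)
    {S : Set Y} (hSf : ∀ x ∈ S, f x ∈ S) (hSg : ∀ x ∈ S, g x ∈ S)
    {a b : Y} (h : srel f g a b) (ha : a ∈ S) : b ∈ S := by
  suffices H : a ∈ S ↔ b ∈ S from H.mp ha
  clear ha
  induction h with
  | rel x y hxy =>
      rcases hxy with h | h
      · subst h
        exact ⟨fun hx => hSf _ hx, fun hx => by simpa [hf x] using hSf _ hx⟩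
      · subst h
        exact ⟨fun hx => hSg _ hx, fun hx => by simpa [hg x] using hSg _ hx⟩
  | refl x => exact Iff.rfl
  | symm x y _ ih => exact ih.symm
  | trans x y z _ _ ih1 ih2 => exact ih1.trans ih2

/-- the composite map ρ = f ∘ g -/
def rr (f g : Y → Y) : Y → Y := fun y => f (g y)

theorem RV {f g : Y → Y} (hf : Involutive f) (hg : Involutive g) (y : Y) :
    rr f g (rr g f y) = y := by
  simp only [rr, hg (f y), hf y]

/-- V^j (R^i y) = R^(i-j) y for j ≤ i -/
theorem I1 {f g : Y → Y} (hf : Involutive f) (hg : Involutive g) :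
    ∀ j i (y : Y), j ≤ i → (rr g f)^[j] ((rr f g)^[i] y) = (rr f g)^[i - j] y := by
  intro j
  induction j with
  | zero => intro i y _; simp
  | succ j ih =>
      intro i y hj
      obtain ⟨k, rfl⟩ : ∃ k, i = k + 1 := ⟨i - 1, by omega⟩
      rw [iterate_succ_apply, iterate_succ_apply' (rr f g) k y, RV hg hf]
      rw [ih k y (by omega)]
      congr 1
      omega

theorem I3 {f g : Y → Y} (hf : Involutive f) (hg : Involutive g) :
    ∀ k (y : Y), f ((rr f g)^[k] y) = (rr g f)^[k] (f y) := by
  intro k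
  induction k with
  | zero => intro y; simp
  | succ k ih =>
      intro y
      rw [iterate_succ_apply' (rr f g), iterate_succ_apply' (rr g f), ← ih y]
      show f (f (g ((rr f g)^[k] y))) = g (f (f ((rr f g)^[k] y)))
      rw [hf, hf]

theorem I4 {f g : Y → Y} (hf : Involutive f) (hg : Involutive g) :
    ∀ k (y : Y), g ((rr f g)^[k] y) = (rr g f)^[k] (g y) := by
  intro k
  induction k with
  | zero => intro y; simp
  | succ k ih =>
      intro y
      rw [iterate_succ_apply' (rr f g), iterate_succ_apply' (rr g f), ← ih y]
      rfl

theorem I5 {f g : Y → Y} (hf : Involutive f) (hg : Involutive g) :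
    ∀ k (y : Y), (rr f g)^[k] (f y) = f ((rr g f)^[k] y) := by
  intro k
  induction k with
  | zero => intro y; simp
  | succ k ih =>
      intro y
      rw [iterate_succ_apply' (rr f g), iterate_succ_apply' (rr g f), ih y]
      show rr f g (f ((rr g f)^[k] y)) = f (rr g f ((rr g f)^[k] y))
      rfl

theorem Rmod {f g : Y → Y} {d : Y} {m : ℕ} (hm : 0 < m) (hper : (rr f g)^[m] d = d) :
    ∀ i, (rr f g)^[i] d = (rr f g)^[i % m] d := by
  intro i
  induction i using Nat.strong_induction_on with
  | _ i ih =>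
      rcases lt_or_ge i m with h | h
      · rw [Nat.mod_eq_of_lt h]
      · have h1 : i = (i - m) + m := by omega
        have h2 : (rr f g)^[i] d = (rr f g)^[i - m] d := by
          conv_lhs => rw [h1]
          rw [Function.iterate_add_apply, hper]
        rw [h2, ih (i - m) (by omega), Nat.mod_eq_sub_mod h]

theorem Rmul {f g : Y → Y} {d : Y} {m : ℕ} (hper : (rr f g)^[m] d = d) :
    ∀ s, (rr f g)^[s * m] d = d := by
  intro s
  induction s with
  | zero => simp
  | succ s ih => rw [Nat.succ_mul, Function.iterate_add_apply, hper, ih]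

theorem minPeriod_pos [Finite Y] {f g : Y → Y} (hf : Involutive f) (hg : Involutive g) (d : Y) :
    0 < Function.minimalPeriod (rr f g) d := by
  cases nonempty_fintype Y
  classical
  set P : Equiv.Perm Y := (hg.toPerm g).trans (hf.toPerm f) with hP
  have hcoe : ∀ y, P y = rr f g y := fun y => rfl
  have hiter : ∀ n (y : Y), (rr f g)^[n] y = (P ^ n) y := by
    intro n
    induction n with
    | zero => intro y; simp
    | succ n ih =>
        intro y
        rw [iterate_succ_apply (rr f g), ih, pow_succ, Equiv.Perm.mul_apply, hcoe]
  have hpp : Function.IsPeriodicPt (rr f g) (orderOf P) d := by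
    show (rr f g)^[orderOf P] d = d
    rw [hiter, pow_orderOf_eq_one]
    rfl
  exact hpp.minimalPeriod_pos (orderOf_pos P)


section Cls

variable [Fintype Y]

open scoped Classical in
/-- the equivalence class (orbit) of `a` as a finset -/
noncomputable def cls (f g : Y → Y) (a : Y) : Finset Y :=
  Finset.univ.filter (srel f g a)

theorem mem_cls {f g : Y → Y} {a b : Y} : b ∈ cls f g a ↔ srel f g a b := by
  simp [cls]

theorem self_mem_cls {f g : Y → Y} {a : Y} : a ∈ cls f g a :=
  mem_cls.mpr ((srel_equiv f g).refl a)

theorem cls_f {f g : Y → Y} {a b : Y} (h : b ∈ cls f g a) : f b ∈ cls f g a :=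
  mem_cls.mpr (srel_f (mem_cls.mp h))

theorem cls_g {f g : Y → Y} {a b : Y} (h : b ∈ cls f g a) : g b ∈ cls f g a :=
  mem_cls.mpr (srel_g (mem_cls.mp h))

theorem cls_comm {f g : Y → Y} {a : Y} : cls f g a = cls g f a := by
  ext b; simp [mem_cls, srel_comm]

theorem cls_eq_of_mem {f g : Y → Y} {a d : Y} (h : d ∈ cls f g a) :
    cls f g d = cls f g a := by
  rw [mem_cls] at h
  ext b
  rw [mem_cls, mem_cls]
  exact ⟨fun hb => (srel_equiv f g).trans h hb,
    fun hb => (srel_equiv f g).trans ((srel_equiv f g).symm h) hb⟩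

theorem cls_subset {f g : Y → Y} (hf : Involutive f) (hg : Involutive g)
    {a : Y} {S : Finset Y} (hSf : ∀ x ∈ S, f x ∈ S) (hSg : ∀ x ∈ S, g x ∈ S)
    (ha : a ∈ S) : cls f g a ⊆ S := by
  intro b hb
  exact srel_closed hf hg (S := (S : Set Y)) (by simpa using hSf) (by simpa using hSg)
    (mem_cls.mp hb) ha

theorem cls_iter {f g : Y → Y} {a b : Y} (h : b ∈ cls f g a) (k : ℕ) :
    (rr f g)^[k] b ∈ cls f g a := by
  induction k with
  | zero => simpa using h
  | succ k ih => rw [iterate_succ_apply' (rr f g)]; exact cls_f (cls_g ih)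

open scoped Classical in
/-- weight of the orbit of `a` -/
noncomputable def wgt (f g : Y → Y) (a : Y) : ℕ :=
  2 * (cls f g a).card
  + 3 * ((cls f g a).filter fun y => f y = y).card
  + 3 * ((cls f g a).filter fun y => g y = y).card
  + 4 * ((cls f g a).filter fun y => f y = y ∧ g y = y).card

theorem wgt_comm {f g : Y → Y} {a : Y} : wgt f g a = wgt g f a := by
  classical
  unfold wgt
  rw [cls_comm (f := f)]
  have h1 : ((cls g f a).filter fun y => f y = y ∧ g y = y)
      = ((cls g f a).filter fun y => g y = y ∧ f y = y) := by
    apply Finset.filter_congr; intro y _; tauto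
  rw [h1]
  omega

end Cls


section Cases

variable [Fintype Y] {f g : Y → Y}

theorem case_both (hf : Involutive f) (hg : Involutive g) {a d : Y}
    (hd : d ∈ cls f g a) (hdf : f d = d) (hdg : g d = d) :
    wgt f g a = 12 ∧ ∀ b ∈ cls f g a, rr f g (rr f g (rr f g b)) = b := by
  classical
  have hC : cls f g a = {d} := by
    rw [← cls_eq_of_mem hd]
    have hsub : cls f g d ⊆ {d} := by
      apply cls_subset hf hg
      · intro x hx; simp at hx ⊢; rw [hx, hdf]
      · intro x hx; simp at hx ⊢; rw [hx, hdg]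
      · simp
    exact Finset.Subset.antisymm hsub (by simpa using self_mem_cls)
  constructor
  · unfold wgt
    rw [hC]
    rw [Finset.filter_singleton, Finset.filter_singleton, Finset.filter_singleton]
    simp [hdf, hdg]
  · intro b hb
    rw [hC] at hb
    simp at hb
    subst hb
    simp [rr, hdf, hdg]

theorem case_fixed (hf : Involutive f) (hg : Involutive g)
    (HC : ∀ p, f p = p → f (g p) = g p → g p = p)
    {a d : Y} (hd : d ∈ cls f g a) (hdf : f d = d) (hdg : g d ≠ d) :
    (12 ≤ wgt f g a) ∧
    (wgt f g a = 12 → ∀ b ∈ cls f g a, rr f g (rr f g (rr f g b)) = b) ∧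
    ((∀ y, rr f g (rr f g (rr f g y)) = y) → wgt f g a = 12) := by
  classical
  have hOd : cls f g d = cls f g a := cls_eq_of_mem hd
  -- the three basic distinct elements
  have h2 : f (g d) ≠ g d := fun h => hdg (HC d hdf h)
  have h3 : f (g d) ≠ d := fun h => hdg (hf.injective (h.trans hdf.symm))
  have hmem1 : g d ∈ cls f g a := cls_g hd
  have hmem2 : f (g d) ∈ cls f g a := cls_f hmem1
  have htriple : ({d, g d, f (g d)} : Finset Y) ⊆ cls f g a := by
    intro x hx
    simp only [Finset.mem_insert, Finset.mem_singleton] at hx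
    rcases hx with rfl | rfl | rfl
    · exact hd
    · exact hmem1
    · exact hmem2
  have htcard : ({d, g d, f (g d)} : Finset Y).card = 3 := by
    rw [Finset.card_insert_of_notMem (by simp [Ne.symm hdg, Ne.symm h3]),
      Finset.card_insert_of_notMem (by simp [Ne.symm h2]), Finset.card_singleton]
  have hcard3 : 3 ≤ (cls f g a).card := htcard ▸ Finset.card_le_card htriple
  -- minimal period machinery
  set m := Function.minimalPeriod (rr f g) d with hmdef
  have hm0 : 0 < m := minPeriod_pos hf hg d
  have hper : (rr f g)^[m] d = d := Function.iterate_minimalPeriod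
  have hmin : ∀ k, 0 < k → k < m → (rr f g)^[k] d ≠ d := by
    intro k hk1 hk2 h
    exact Function.not_isPeriodicPt_of_pos_of_lt_minimalPeriod (by omega) hk2 h
  have hm1 : m ≠ 1 := by
    intro h
    rw [h] at hper
    have : f (g d) = d := hper
    exact hdg (hf.injective (this.trans hdf.symm))
  have key1 : ∀ k, k ≤ m → f ((rr f g)^[k] d) = (rr f g)^[m - k] d := by
    intro k hk
    rw [I3 hf hg, hdf]
    conv_lhs => rw [← hper]
    exact I1 hf hg k m d hk
  have key2 : ∀ k, k + 1 ≤ m → g ((rr f g)^[k] d) = (rr f g)^[m - 1 - k] d := by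
    intro k hk
    rw [I4 hf hg]
    have hgd : g d = (rr g f)^[1] ((rr f g)^[m] d) := by
      rw [hper]
      show g d = g (f d)
      rw [hdf]
    rw [hgd, ← Function.iterate_add_apply, I1 hf hg (k + 1) m d hk]
    congr 1
    omega
  -- two fixed-point incidences
  have hInc : 6 ≤ 3 * ((cls f g a).filter fun y => f y = y).card
      + 3 * ((cls f g a).filter fun y => g y = y).card := by
    rcases Nat.even_or_odd m with ⟨s, hs⟩ | ⟨s, hs⟩
    · -- m = s + s : second f-fixed point
      have hs0 : 0 < s := by omega
      have hsm : s < m := by omega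
      have hbf : f ((rr f g)^[s] d) = (rr f g)^[s] d := by
        rw [key1 s (by omega)]
        congr 1
        omega
      have hbne : (rr f g)^[s] d ≠ d := hmin s hs0 hsm
      have hsub : ({d, (rr f g)^[s] d} : Finset Y) ⊆
          (cls f g a).filter fun y => f y = y := by
        intro x hx
        simp only [Finset.mem_insert, Finset.mem_singleton] at hx
        rcases hx with rfl | rfl
        · exact Finset.mem_filter.mpr ⟨hd, hdf⟩
        · exact Finset.mem_filter.mpr ⟨cls_iter hd s, hbf⟩
      have : 2 ≤ ((cls f g a).filter fun y => f y = y).card := by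
        calc 2 = ({d, (rr f g)^[s] d} : Finset Y).card := by
              rw [Finset.card_insert_of_notMem (by simp [Ne.symm hbne]),
                Finset.card_singleton]
          _ ≤ _ := Finset.card_le_card hsub
      omega
    · -- m = 2 s + 1 : a g-fixed point
      have hs0 : 0 < s := by omega
      have hbg : g ((rr f g)^[s] d) = (rr f g)^[s] d := by
        rw [key2 s (by omega)]
        congr 1
        omega
      have c1 : 1 ≤ ((cls f g a).filter fun y => f y = y).card :=
        Finset.card_pos.mpr ⟨d, Finset.mem_filter.mpr ⟨hd, hdf⟩⟩
      have c2 : 1 ≤ ((cls f g a).filter fun y => g y = y).card :=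
        Finset.card_pos.mpr ⟨(rr f g)^[s] d, Finset.mem_filter.mpr ⟨cls_iter hd s, hbg⟩⟩
      omega
  refine ⟨by unfold wgt; omega, ?_, ?_⟩
  · -- equality forces the hexagon relation (here: 3-cycle)
    intro hw
    have hOcard : (cls f g a).card = 3 := by
      unfold wgt at hw
      omega
    have hOeq : cls f g a = {d, g d, f (g d)} :=
      (Finset.eq_of_subset_of_card_le htriple (by omega)).symm
    have hq : g (f (g d)) = f (g d) := by
      have hmem3 : g (f (g d)) ∈ cls f g a := cls_g hmem2
      rw [hOeq] at hmem3
      simp only [Finset.mem_insert, Finset.mem_singleton] at hmem3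
      rcases hmem3 with h | h | h
      · exact absurd (hg.injective (h.trans (hg d).symm)) h2
      · exact absurd (hg.injective h) h3
      · exact h
    have Rd : rr f g d = f (g d) := rfl
    have Rfgd : rr f g (f (g d)) = g d := by
      show f (g (f (g d))) = g d
      rw [hq, hf]
    have Rgd : rr f g (g d) = d := by
      show f (g (g d)) = d
      rw [hg, hdf]
    intro b hb
    rw [hOeq] at hb
    simp only [Finset.mem_insert, Finset.mem_singleton] at hb
    rcases hb with rfl | rfl | rfl
    · rw [Rd, Rfgd, Rgd]
    · rw [Rgd, Rd, Rfgd]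
    · rw [Rfgd, Rgd, Rd]
  · -- braided case: weight is exactly 12
    intro hR3
    have hq : g (f (g d)) = f (g d) := by
      have h0 : f (g (f (g (f (g d))))) = d := hR3 d
      have h1 : g (f (g (f (g d)))) = d := hf.injective (h0.trans hdf.symm)
      have h1' : f (g (f (g d))) = g d := hg.injective (h1.trans (hg d).symm)
      have h1'' := congrArg f h1'
      rwa [hf] at h1''
    have hOeq : cls f g a = {d, g d, f (g d)} := by
      rw [← hOd]
      apply Finset.Subset.antisymm
      · apply cls_subset hf hg
        · intro x hx
          simp only [Finset.mem_insert, Finset.mem_singleton] at hx ⊢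
          rcases hx with rfl | rfl | rfl
          · left; exact hdf
          · right; right; rfl
          · right; left; exact hf _
        · intro x hx
          simp only [Finset.mem_insert, Finset.mem_singleton] at hx ⊢
          rcases hx with rfl | rfl | rfl
          · right; left; rfl
          · left; exact hg _
          · right; right; exact hq
        · simp
      · rw [hOd]
        exact htriple
    have Ff : ((cls f g a).filter fun y => f y = y) = {d} := by
      rw [hOeq]
      ext y
      simp only [Finset.mem_filter, Finset.mem_insert, Finset.mem_singleton]
      constructor
      · rintro ⟨rfl | rfl | rfl, hfix⟩
        · rfl
        · exact absurd hfix h2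
        · rw [hf] at hfix
          exact absurd hfix.symm h2
      · rintro rfl
        exact ⟨Or.inl rfl, hdf⟩
    have Fg : ((cls f g a).filter fun y => g y = y) = {f (g d)} := by
      rw [hOeq]
      ext y
      simp only [Finset.mem_filter, Finset.mem_insert, Finset.mem_singleton]
      constructor
      · rintro ⟨rfl | rfl | rfl, hfix⟩
        · exact absurd hfix hdg
        · rw [hg] at hfix
          exact absurd hfix.symm hdg
        · rfl
      · rintro rfl
        exact ⟨Or.inr (Or.inr rfl), hq⟩
    have Fb : ((cls f g a).filter fun y => f y = y ∧ g y = y) = ∅ := by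
      rw [Finset.eq_empty_iff_forall_notMem]
      intro y hy
      rw [Finset.mem_filter] at hy
      obtain ⟨hmemy, hfy, hgy⟩ := hy
      have e1 : y ∈ (cls f g a).filter fun y => f y = y := Finset.mem_filter.mpr ⟨hmemy, hfy⟩
      have e2 : y ∈ (cls f g a).filter fun y => g y = y := Finset.mem_filter.mpr ⟨hmemy, hgy⟩
      rw [Ff, Finset.mem_singleton] at e1
      rw [Fg, Finset.mem_singleton] at e2
      subst e1
      exact h3 e2.symm
    have hOcard : (cls f g a).card = 3 := by
      rw [hOeq, htcard]
    unfold wgt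
    rw [hOcard, Ff, Fg, Fb]
    simp

theorem iter3 {f g : Y → Y} (y : Y) :
    (rr f g)^[3] y = rr f g (rr f g (rr f g y)) := by
  rw [show (3 : ℕ) = 2 + 1 from rfl, iterate_succ_apply, show (2 : ℕ) = 1 + 1 from rfl,
    iterate_succ_apply, iterate_one]

theorem case_free (hf : Involutive f) (hg : Involutive g)
    (HA : ∀ p, f p = g p → f p = p)
    (HB : ∀ p, f (g (f p)) = g p → f p = p)
    {a : Y} (hfree : ∀ b ∈ cls f g a, f b ≠ b ∧ g b ≠ b) :
    (12 ≤ wgt f g a) ∧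
    (wgt f g a = 12 → ∀ b ∈ cls f g a, rr f g (rr f g (rr f g b)) = b) ∧
    ((∀ y, rr f g (rr f g (rr f g y)) = y) → wgt f g a = 12) := by
  classical
  have ma : a ∈ cls f g a := self_mem_cls
  have mF : f a ∈ cls f g a := cls_f ma
  have mG : g a ∈ cls f g a := cls_g ma
  have mFG : f (g a) ∈ cls f g a := cls_f mG
  have mGF : g (f a) ∈ cls f g a := cls_g mF
  have mFGF : f (g (f a)) ∈ cls f g a := cls_f mGF
  have naf : f a ≠ a := (hfree a ma).1
  have nag : g a ≠ a := (hfree a ma).2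
  have nFg : g (f a) ≠ f a := (hfree _ mF).2
  have nGf : f (g a) ≠ g a := (hfree _ mG).1
  have nGFf : f (g (f a)) ≠ g (f a) := (hfree _ mGF).1
  -- pairwise distinctness of the six elements
  have d12 : a ≠ f a := Ne.symm naf
  have d13 : a ≠ g a := Ne.symm nag
  have d14 : a ≠ f (g a) := by
    intro h
    have : f a = g a := by nth_rewrite 1 [h]; rw [hf]
    exact naf (HA a this)
  have d15 : a ≠ g (f a) := by
    intro h
    have : g a = f a := by nth_rewrite 1 [h]; rw [hg]
    exact naf (HA a this.symm)
  have d16 : a ≠ f (g (f a)) := by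
    intro h
    have : f a = g (f a) := by nth_rewrite 1 [h]; rw [hf]
    exact nFg this.symm
  have d23 : f a ≠ g a := fun h => naf (HA a h)
  have d24 : f a ≠ f (g a) := fun h => nag (hf.injective h).symm
  have d25 : f a ≠ g (f a) := Ne.symm nFg
  have d26 : f a ≠ f (g (f a)) := fun h => d15 (hf.injective h)
  have d34 : g a ≠ f (g a) := Ne.symm nGf
  have d35 : g a ≠ g (f a) := fun h => d12 (hg.injective h)
  have d36 : g a ≠ f (g (f a)) := fun h => naf (HB a h.symm)
  have d45 : f (g a) ≠ g (f a) := by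
    intro h
    have h' : g a = f (g (f a)) := by rw [← hf (g a), h]
    exact d36 h'
  have d46 : f (g a) ≠ f (g (f a)) := fun h => d35 (hf.injective h)
  have d56 : g (f a) ≠ f (g (f a)) := Ne.symm nGFf
  set T : Finset Y := {a, f a, g a, f (g a), g (f a), f (g (f a))} with hTdef
  have hT : T ⊆ cls f g a := by
    intro x hx
    simp only [hTdef, Finset.mem_insert, Finset.mem_singleton] at hx
    rcases hx with rfl | rfl | rfl | rfl | rfl | rfl
    exacts [ma, mF, mG, mFG, mGF, mFGF]
  have hTcard : T.card = 6 := by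
    rw [hTdef]
    rw [Finset.card_insert_of_notMem (by simp [d12, d13, d14, d15, d16]),
      Finset.card_insert_of_notMem (by simp [d23, d24, d25, d26]),
      Finset.card_insert_of_notMem (by simp [d34, d35, d36]),
      Finset.card_insert_of_notMem (by simp [d45, d46]),
      Finset.card_insert_of_notMem (by simp [d56]), Finset.card_singleton]
  have hcard6 : 6 ≤ (cls f g a).card := hTcard ▸ Finset.card_le_card hT
  have Ff0 : ((cls f g a).filter fun y => f y = y) = ∅ :=
    Finset.filter_eq_empty_iff.mpr (fun {x} hx => (hfree _ hx).1)
  have Fg0 : ((cls f g a).filter fun y => g y = y) = ∅ :=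
    Finset.filter_eq_empty_iff.mpr (fun {x} hx => (hfree _ hx).2)
  have Fb0 : ((cls f g a).filter fun y => f y = y ∧ g y = y) = ∅ :=
    Finset.filter_eq_empty_iff.mpr (fun {x} hx h => (hfree _ hx).1 h.1)
  refine ⟨by unfold wgt; omega, ?_, ?_⟩
  · -- equality case : the orbit is a hexagon on which ρ³ = 1
    intro hw
    have hOcard : (cls f g a).card = 6 := by
      unfold wgt at hw
      rw [Ff0, Fg0, Fb0] at hw
      simp at hw
      omega
    set m := Function.minimalPeriod (rr f g) a with hmdef
    have hm0 : 0 < m := minPeriod_pos hf hg a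
    have hper : (rr f g)^[m] a = a := Function.iterate_minimalPeriod
    have hmin : ∀ k, 0 < k → k < m → (rr f g)^[k] a ≠ a := by
      intro k hk1 hk2 h
      exact Function.not_isPeriodicPt_of_pos_of_lt_minimalPeriod (by omega) hk2 h
    have keyinj : ∀ i j, i ≤ j → j < m → (rr f g)^[i] a = (rr f g)^[j] a → i = j := by
      intro i j hij hj h
      have h1 := congrArg (rr g f)^[i] h
      rw [I1 hf hg i i a le_rfl, I1 hf hg i j a hij, Nat.sub_self] at h1
      simp only [Function.iterate_zero_apply] at h1
      by_contra hne
      exact hmin (j - i) (by omega) (by omega) h1.symm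
    have hga1 : g a = (rr g f)^[1] (f a) := by
      show g a = g (f (f a))
      rw [hf]
    have hfa_not_lt : ∀ k, k < m → f a ≠ (rr f g)^[k] a := by
      intro k hk h
      rcases Nat.eq_zero_or_pos k with rfl | hk0
      · exact naf h
      rcases Nat.even_or_odd k with ⟨j, hj⟩ | ⟨j, hj⟩
      · -- even : an f-fixed point in the orbit
        have : f ((rr f g)^[j] a) = (rr f g)^[j] a := by
          rw [I3 hf hg, h, I1 hf hg j k a (by omega)]
          congr 1
          omega
        exact (hfree _ (cls_iter ma j)).1 this
      · -- odd : a g-fixed point in the orbit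
        have hga2 : g a = (rr f g)^[k - 1] a := by
          rw [hga1, h, I1 hf hg 1 k a (by omega)]
        have : g ((rr f g)^[j] a) = (rr f g)^[j] a := by
          rw [I4 hf hg, hga2, I1 hf hg j (k - 1) a (by omega)]
          congr 1
          omega
        exact (hfree _ (cls_iter ma j)).2 this
    have hfa_not : ∀ k, f a ≠ (rr f g)^[k] a := by
      intro k h
      rw [Rmod hm0 hper k] at h
      exact hfa_not_lt (k % m) (Nat.mod_lt _ hm0) h
    have hVa : (rr g f)^[m] a = a := by
      conv_lhs => rw [← hper]
      rw [I1 hf hg m m a le_rfl, Nat.sub_self]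
      simp
    have hfa_per : (rr f g)^[m] (f a) = f a := by
      rw [I5 hf hg, hVa]
    have Vpow : ∀ t, (rr g f)^[t] a = (rr f g)^[t * m - t] a := by
      intro t
      conv_lhs => rw [show a = (rr f g)^[t * m] a from (Rmul hper t).symm]
      exact I1 hf hg t (t * m) a (Nat.le_mul_of_pos_right t hm0)
    have Vpow_fa : ∀ t, (rr g f)^[t] (f a) = (rr f g)^[t * m - t] (f a) := by
      intro t
      conv_lhs => rw [show f a = (rr f g)^[t * m] (f a) from (Rmul hfa_per t).symm]
      exact I1 hf hg t (t * m) (f a) (Nat.le_mul_of_pos_right t hm0)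
    set Sd : Finset Y := (Finset.range m).image (fun k => (rr f g)^[k] a) with hSd
    set Sf : Finset Y := (Finset.range m).image (fun k => (rr f g)^[k] (f a)) with hSf
    have memSd : ∀ k, (rr f g)^[k] a ∈ Sd := by
      intro k
      rw [Rmod hm0 hper k]
      exact Finset.mem_image.mpr ⟨k % m, Finset.mem_range.mpr (Nat.mod_lt _ hm0), rfl⟩
    have memSf : ∀ k, (rr f g)^[k] (f a) ∈ Sf := by
      intro k
      rw [Rmod hm0 hfa_per k]
      exact Finset.mem_image.mpr ⟨k % m, Finset.mem_range.mpr (Nat.mod_lt _ hm0), rfl⟩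
    have cardSd : Sd.card = m := by
      rw [hSd, Finset.card_image_of_injOn, Finset.card_range]
      intro i hi j hj hij
      simp only [Finset.mem_coe, Finset.mem_range] at hi hj
      rcases le_total i j with h | h
      · exact keyinj i j h hj hij
      · exact (keyinj j i h hi hij.symm).symm
    have keyinj2 : ∀ i j, i ≤ j → j < m →
        (rr f g)^[i] (f a) = (rr f g)^[j] (f a) → i = j := by
      intro i j hij hj h
      rw [I5 hf hg, I5 hf hg] at h
      have h2 := hf.injective h
      have h3 := congrArg (rr f g)^[i] h2
      rw [I1 hg hf i i a le_rfl, I1 hg hf i j a hij, Nat.sub_self] at h3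
      simp only [Function.iterate_zero_apply] at h3
      by_contra hne
      have h4 := congrArg (rr f g)^[j - i] h3
      rw [I1 hg hf (j - i) (j - i) a le_rfl, Nat.sub_self] at h4
      simp only [Function.iterate_zero_apply] at h4
      exact hmin (j - i) (by omega) (by omega) h4
    have cardSf : Sf.card = m := by
      rw [hSf, Finset.card_image_of_injOn, Finset.card_range]
      intro i hi j hj hij
      simp only [Finset.mem_coe, Finset.mem_range] at hi hj
      rcases le_total i j with h | h
      · exact keyinj2 i j h hj hij
      · exact (keyinj2 j i h hi hij.symm).symm
    have hdisj : Disjoint Sd Sf := by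
      rw [Finset.disjoint_left]
      intro x hx hx'
      rw [hSd, Finset.mem_image] at hx
      rw [hSf, Finset.mem_image] at hx'
      obtain ⟨i, hi, rfl⟩ := hx
      obtain ⟨j, hj, hji⟩ := hx'
      rw [Finset.mem_range] at hi hj
      rcases le_total j i with h | h
      · -- f a = R^[i-j] a
        have h1 := congrArg (rr g f)^[j] hji.symm
        rw [I1 hf hg j i a h, I1 hf hg j j (f a) le_rfl, Nat.sub_self] at h1
        simp only [Function.iterate_zero_apply] at h1
        exact hfa_not (i - j) h1.symm
      · have h1 := congrArg (rr g f)^[j] hji.symm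
        rw [I1 hf hg j j (f a) le_rfl, Nat.sub_self] at h1
        simp only [Function.iterate_zero_apply] at h1
        rw [show j = (j - i) + i from by omega, Function.iterate_add_apply,
          I1 hf hg i i a le_rfl, Nat.sub_self] at h1
        simp only [Function.iterate_zero_apply] at h1
        rw [Vpow (j - i)] at h1
        exact hfa_not _ h1.symm
    have hclosed_f : ∀ x ∈ Sd ∪ Sf, f x ∈ Sd ∪ Sf := by
      intro x hx
      rw [Finset.mem_union] at hx ⊢
      rcases hx with hx | hx
      · rw [hSd, Finset.mem_image] at hx
        obtain ⟨k, _, rfl⟩ := hx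
        right
        rw [I3 hf hg, Vpow_fa k]
        exact memSf _
      · rw [hSf, Finset.mem_image] at hx
        obtain ⟨k, _, rfl⟩ := hx
        left
        rw [I5 hf hg, hf, Vpow k]
        exact memSd _
    have hclosed_g : ∀ x ∈ Sd ∪ Sf, g x ∈ Sd ∪ Sf := by
      intro x hx
      rw [Finset.mem_union] at hx ⊢
      rcases hx with hx | hx
      · rw [hSd, Finset.mem_image] at hx
        obtain ⟨k, _, rfl⟩ := hx
        right
        rw [I4 hf hg, hga1, ← Function.iterate_add_apply, Vpow_fa (k + 1)]
        exact memSf _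
      · rw [hSf, Finset.mem_image] at hx
        obtain ⟨k, _, rfl⟩ := hx
        left
        have : g (f a) = (rr g f)^[1] a := rfl
        rw [I4 hf hg, this, ← Function.iterate_add_apply, Vpow (k + 1)]
        exact memSd _
    have hsub1 : cls f g a ⊆ Sd ∪ Sf := by
      apply cls_subset hf hg hclosed_f hclosed_g
      exact Finset.mem_union_left _ (by
        have := memSd 0
        simpa using this)
    have hsub2 : Sd ∪ Sf ⊆ cls f g a := by
      intro x hx
      rw [Finset.mem_union] at hx
      rcases hx with hx | hx
      · rw [hSd, Finset.mem_image] at hx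
        obtain ⟨k, _, rfl⟩ := hx
        exact cls_iter ma k
      · rw [hSf, Finset.mem_image] at hx
        obtain ⟨k, _, rfl⟩ := hx
        exact cls_iter mF k
    have hOeq : cls f g a = Sd ∪ Sf := Finset.Subset.antisymm hsub1 hsub2
    have hm3 : m = 3 := by
      have : (Sd ∪ Sf).card = m + m := by
        rw [Finset.card_union_of_disjoint hdisj, cardSd, cardSf]
      rw [← hOeq, hOcard] at this
      omega
    have hRa : (rr f g)^[3] a = a := by rw [← hm3]; exact hper
    have hRfa : (rr f g)^[3] (f a) = f a := by rw [← hm3]; exact hfa_per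
    intro b hb
    rw [← iter3]
    rw [hOeq, Finset.mem_union] at hb
    rcases hb with hb | hb
    · rw [hSd, Finset.mem_image] at hb
      obtain ⟨k, _, rfl⟩ := hb
      rw [← Function.iterate_add_apply, Nat.add_comm, Function.iterate_add_apply, hRa]
    · rw [hSf, Finset.mem_image] at hb
      obtain ⟨k, _, rfl⟩ := hb
      rw [← Function.iterate_add_apply, Nat.add_comm, Function.iterate_add_apply, hRfa]
  · -- braided case
    intro hR3
    have q1 : g (f (g a)) = f (g (f a)) := by
      have h0 : f (g (f (g (f (g a))))) = a := hR3 a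
      have h1 : g (f (g (f (g a)))) = f a := hf.injective (h0.trans (hf a).symm)
      have h2 : f (g (f (g a))) = g (f a) := hg.injective (h1.trans (hg (f a)).symm)
      have h3 := congrArg f h2
      rwa [hf] at h3
    have q2 : g (f (g (f a))) = f (g a) := by
      have := congrArg g q1
      rw [hg] at this
      exact this.symm
    have hOeq : cls f g a = T := by
      apply Finset.Subset.antisymm _ hT
      apply cls_subset hf hg
      · intro x hx
        simp only [hTdef, Finset.mem_insert, Finset.mem_singleton] at hx ⊢
        rcases hx with rfl | rfl | rfl | rfl | rfl | rfl
        · right; left; rfl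
        · left; exact hf a
        · right; right; right; left; rfl
        · right; right; left; exact hf _
        · right; right; right; right; right; rfl
        · right; right; right; right; left; exact hf _
      · intro x hx
        simp only [hTdef, Finset.mem_insert, Finset.mem_singleton] at hx ⊢
        rcases hx with rfl | rfl | rfl | rfl | rfl | rfl
        · right; right; left; rfl
        · right; right; right; right; left; rfl
        · left; exact hg a
        · right; right; right; right; right; exact q1
        · right; left; exact hg _
        · right; right; right; left; exact q2
      · exact Finset.mem_insert_self _ _
    unfold wgt
    rw [Ff0, Fg0, Fb0, hOeq, hTcard]
    simp

theorem RV3 {f g : Y → Y} (hf : Involutive f) (hg : Involutive g) (y : Y) :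
    rr f g (rr f g (rr f g (rr g f (rr g f (rr g f y))))) = y := by
  rw [RV hf hg, RV hf hg, RV hf hg]

theorem main_pt (hf : Involutive f) (hg : Involutive g)
    (HAfg : ∀ p, f p = g p → f p = p)
    (HBfg : ∀ p, f (g (f p)) = g p → f p = p)
    (HCfg : ∀ p, f p = p → f (g p) = g p → g p = p)
    (HCgf : ∀ p, g p = p → g (f p) = f p → f p = p)
    (a : Y) :
    (12 ≤ wgt f g a) ∧
    (wgt f g a = 12 → rr f g (rr f g (rr f g a)) = a) ∧
    ((∀ y, rr f g (rr f g (rr f g y)) = y) → wgt f g a = 12) := by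
  by_cases hboth : ∃ d ∈ cls f g a, f d = d ∧ g d = d
  · obtain ⟨d, hd, h1, h2⟩ := hboth
    obtain ⟨hw, hrr⟩ := case_both hf hg hd h1 h2
    exact ⟨le_of_eq hw.symm, fun _ => hrr a self_mem_cls, fun _ => hw⟩
  by_cases hfx : ∃ d ∈ cls f g a, f d = d ∨ g d = d
  · obtain ⟨d, hd, hcase⟩ := hfx
    rcases hcase with h1 | h1
    · have h2 : g d ≠ d := fun h => hboth ⟨d, hd, h1, h⟩
      obtain ⟨p1, p2, p3⟩ := case_fixed hf hg HCfg hd h1 h2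
      exact ⟨p1, fun hw => p2 hw a self_mem_cls, p3⟩
    · have h2 : f d ≠ d := fun h => hboth ⟨d, hd, h, h1⟩
      have hd' : d ∈ cls g f a := cls_comm (f := f) ▸ hd
      obtain ⟨p1, p2, p3⟩ := case_fixed hg hf HCgf hd' h1 h2
      refine ⟨?_, ?_, ?_⟩
      · rw [wgt_comm]
        exact p1
      · intro hw
        have hw' : wgt g f a = 12 := by rw [← wgt_comm]; exact hw
        have h := p2 hw' a self_mem_cls
        nth_rewrite 1 [← h]
        exact RV3 hf hg a
      · intro hy
        rw [wgt_comm]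
        apply p3
        intro y
        nth_rewrite 1 [← hy y]
        exact RV3 hg hf y
  · push_neg at hfx
    obtain ⟨p1, p2, p3⟩ := case_free hf hg HAfg HBfg hfx
    exact ⟨p1, fun hw => p2 hw a self_mem_cls, p3⟩

end Cases


theorem choose2_aux : ∀ n : ℕ, 2 * Nat.choose (n + 1) 2 = n * (n + 1) := by
  intro n
  induction n with
  | zero => decide
  | succ n ih =>
      rw [show n + 1 + 1 = (n + 1) + 1 from rfl, Nat.choose_succ_succ (n + 1) 1,
        Nat.choose_one_right, Nat.mul_add, ih]
      ring

theorem choose3_aux : ∀ n : ℕ, 6 * Nat.choose (n + 2) 3 = n * (n + 1) * (n + 2) := by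
  intro n
  induction n with
  | zero => decide
  | succ n ih =>
      rw [show n + 1 + 2 = (n + 2) + 1 from rfl, Nat.choose_succ_succ (n + 2) 2,
        Nat.mul_add, ih, show (6 : ℕ) = 3 * 2 from rfl, Nat.mul_assoc,
        choose2_aux (n + 1)]
      ring


section Concrete

variable {X : Type*} {r : X × X → X × X}

theorem hA_invol (hinv : Involutive r) : Involutive (r12 r) := by
  rintro ⟨x, y, z⟩
  show ((r ((r (x, y)).1, (r (x, y)).2)).1, (r ((r (x, y)).1, (r (x, y)).2)).2, z)
      = (x, y, z)
  rw [Prod.mk.eta, hinv (x, y)]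

theorem hB_invol (hinv : Involutive r) : Involutive (r23 r) := by
  rintro ⟨x, y, z⟩
  show (x, (r ((r (y, z)).1, (r (y, z)).2)).1, (r ((r (y, z)).1, (r (y, z)).2)).2)
      = (x, y, z)
  rw [Prod.mk.eta, hinv (y, z)]

variable (hl : ∀ x : X, Function.Injective fun y => (r (x, y)).1)
  (hr2 : ∀ x : X, Function.Injective fun y => (r (y, x)).2)
  (hsq : ∀ x : X, r (x, x) = (x, x))

include hl hsq in
theorem leftfix {x y : X} (h : (r (x, y)).1 = x) : y = x := by
  have h2 : (r (x, x)).1 = x := by rw [hsq]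
  exact hl x (show (r (x, y)).1 = (r (x, x)).1 from h.trans h2.symm)

include hr2 hsq in
theorem rightfix {x y : X} (h : (r (y, x)).2 = x) : y = x := by
  have h2 : (r (x, x)).2 = x := by rw [hsq]
  exact hr2 x (show (r (y, x)).2 = (r (x, x)).2 from h.trans h2.symm)

include hl hsq in
theorem fixA (p : X × X × X) : r12 r p = p ↔ p.1 = p.2.1 := by
  obtain ⟨x, y, z⟩ := p
  constructor
  · intro h
    have h1 : (r (x, y)).1 = x := congrArg Prod.fst h
    exact (leftfix hl hsq h1).symm
  · intro h
    have h' : x = y := h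
    subst h'
    show ((r (x, x)).1, (r (x, x)).2, z) = (x, x, z)
    rw [hsq]

include hl hsq in
theorem fixB (p : X × X × X) : r23 r p = p ↔ p.2.1 = p.2.2 := by
  obtain ⟨x, y, z⟩ := p
  constructor
  · intro h
    have h1 : (r (y, z)).1 = y := congrArg (fun q => q.2.1) h
    exact (leftfix hl hsq h1).symm
  · intro h
    have h' : y = z := h
    subst h'
    show (x, (r (y, y)).1, (r (y, y)).2) = (x, y, y)
    rw [hsq]

include hl hsq in
theorem cHA (p : X × X × X) : r12 r p = r23 r p → r12 r p = p := by
  obtain ⟨x, y, z⟩ := p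
  intro h
  have h1 : (r (x, y)).1 = x := congrArg Prod.fst h
  exact (fixA hl hsq _).mpr (leftfix hl hsq h1).symm

include hl hr2 hsq in
theorem cHB (p : X × X × X) :
    r12 r (r23 r (r12 r p)) = r23 r p → r12 r p = p := by
  obtain ⟨x, y, z⟩ := p
  intro h
  have h3 : (r ((r (x, y)).2, z)).2 = (r (y, z)).2 := congrArg (fun q => q.2.2) h
  have h4 : (r (x, y)).2 = y := hr2 z h3
  have h5 : x = y := rightfix hr2 hsq h4
  exact (fixA hl hsq _).mpr h5

include hl hsq in
theorem cHC (p : X × X × X) :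
    r12 r p = p → r12 r (r23 r p) = r23 r p → r23 r p = p := by
  obtain ⟨x, y, z⟩ := p
  intro h1 h2
  have hxy : x = y := (fixA hl hsq _).mp h1
  subst hxy
  have h3 : x = (r (x, z)).1 := (fixA hl hsq _).mp h2
  exact (fixB hl hsq _).mpr (leftfix hl hsq h3.symm).symm

include hl hr2 hsq in
theorem cHC' (p : X × X × X) :
    r23 r p = p → r23 r (r12 r p) = r12 r p → r12 r p = p := by
  obtain ⟨x, y, z⟩ := p
  intro h1 h2
  have hyz : y = z := (fixB hl hsq _).mp h1
  subst hyz
  have h3 : (r (x, y)).2 = y := (fixB hl hsq _).mp h2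
  exact (fixA hl hsq _).mpr (rightfix hr2 hsq h3)

end Concrete


section Count

variable {X : Type*} [Fintype X] {r : X × X → X × X}

open scoped Classical in
theorem cardFixA (hl : ∀ x : X, Function.Injective fun y => (r (x, y)).1)
    (hsq : ∀ x : X, r (x, x) = (x, x)) :
    (Finset.univ.filter fun p : X × X × X => r12 r p = p).card
      = Fintype.card X * Fintype.card X := by
  classical
  have h1 : (Finset.univ.filter fun p : X × X × X => r12 r p = p)
      = Finset.univ.filter fun p : X × X × X => p.1 = p.2.1 :=
    Finset.filter_congr fun p _ => fixA hl hsq p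
  have h2 : (Finset.univ.filter fun p : X × X × X => p.1 = p.2.1)
      = (Finset.univ : Finset (X × X)).image fun q => (q.1, q.1, q.2) := by
    ext ⟨x, y, z⟩
    simp only [Finset.mem_filter, Finset.mem_univ, true_and, Finset.mem_image]
    constructor
    · intro h
      have h' : x = y := h
      exact ⟨(x, z), by rw [← h']⟩
    · rintro ⟨⟨u, v⟩, h⟩
      obtain ⟨h1', h2', h3'⟩ : u = x ∧ u = y ∧ v = z := by
        simpa [Prod.ext_iff] using h
      exact h1'.symm.trans h2'
  have hinj : Function.Injective fun q : X × X => (q.1, q.1, q.2) := by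
    rintro ⟨u, v⟩ ⟨u', v'⟩ h
    simpa [Prod.ext_iff] using ⟨congrArg (fun p => p.1) h, congrArg (fun p => p.2.2) h⟩
  rw [h1, h2, Finset.card_image_of_injective _ hinj, Finset.card_univ, Fintype.card_prod]

open scoped Classical in
theorem cardFixB (hl : ∀ x : X, Function.Injective fun y => (r (x, y)).1)
    (hsq : ∀ x : X, r (x, x) = (x, x)) :
    (Finset.univ.filter fun p : X × X × X => r23 r p = p).card
      = Fintype.card X * Fintype.card X := by
  classical
  have h1 : (Finset.univ.filter fun p : X × X × X => r23 r p = p)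
      = Finset.univ.filter fun p : X × X × X => p.2.1 = p.2.2 :=
    Finset.filter_congr fun p _ => fixB hl hsq p
  have h2 : (Finset.univ.filter fun p : X × X × X => p.2.1 = p.2.2)
      = (Finset.univ : Finset (X × X)).image fun q => (q.1, q.2, q.2) := by
    ext ⟨x, y, z⟩
    simp only [Finset.mem_filter, Finset.mem_univ, true_and, Finset.mem_image]
    constructor
    · intro h
      have h' : y = z := h
      exact ⟨(x, y), by rw [← h']⟩
    · rintro ⟨⟨u, v⟩, h⟩
      obtain ⟨h1', h2', h3'⟩ : u = x ∧ v = y ∧ v = z := by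
        simpa [Prod.ext_iff] using h
      exact h2'.symm.trans h3'
  have hinj : Function.Injective fun q : X × X => (q.1, q.2, q.2) := by
    rintro ⟨u, v⟩ ⟨u', v'⟩ h
    simpa [Prod.ext_iff] using ⟨congrArg (fun p => p.1) h, congrArg (fun p => p.2.2) h⟩
  rw [h1, h2, Finset.card_image_of_injective _ hinj, Finset.card_univ, Fintype.card_prod]

open scoped Classical in
theorem cardBoth (hl : ∀ x : X, Function.Injective fun y => (r (x, y)).1)
    (hsq : ∀ x : X, r (x, x) = (x, x)) :
    (Finset.univ.filter fun p : X × X × X => r12 r p = p ∧ r23 r p = p).card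
      = Fintype.card X := by
  classical
  have h1 : (Finset.univ.filter fun p : X × X × X => r12 r p = p ∧ r23 r p = p)
      = Finset.univ.filter fun p : X × X × X => p.1 = p.2.1 ∧ p.2.1 = p.2.2 :=
    Finset.filter_congr fun p _ => by
      rw [fixA hl hsq p, fixB hl hsq p]
  have h2 : (Finset.univ.filter fun p : X × X × X => p.1 = p.2.1 ∧ p.2.1 = p.2.2)
      = (Finset.univ : Finset X).image fun x => (x, x, x) := by
    ext ⟨x, y, z⟩
    simp only [Finset.mem_filter, Finset.mem_univ, true_and, Finset.mem_image]
    constructor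
    · rintro ⟨h, h'⟩
      have hxy : x = y := h
      have hyz : y = z := h'
      exact ⟨x, by rw [Prod.ext_iff, Prod.ext_iff]; exact ⟨rfl, hxy, hxy.trans hyz⟩⟩
    · rintro ⟨u, h⟩
      obtain ⟨h1', h2', h3'⟩ : u = x ∧ u = y ∧ u = z := by
        simpa [Prod.ext_iff] using h
      exact ⟨h1'.symm.trans h2', h2'.symm.trans h3'⟩
  have hinj : Function.Injective fun x : X => ((x, x, x) : X × X × X) := by
    intro u v h
    exact congrArg (fun p => p.1) h
  rw [h1, h2, Finset.card_image_of_injective _ hinj, Finset.card_univ]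

end Count

end QBSAux

open QBSAux in
/-- For a finite quantum binomial set with |X| = n, the total number of
D-orbits in X³ is at most C(n+2,3), with equality iff (X,r) is a symmetric
set (r satisfies the braid relation). -/
theorem card_orbits_le_and_eq_iff_symmetric {X : Type*} [Fintype X]
    (r : X × X → X × X) (hqb : IsQuantumBinomial r) :
    {O : Set (X × X × X) | IsDOrbit r O}.ncard ≤ (Fintype.card X + 2).choose 3 ∧
    ({O : Set (X × X × X) | IsDOrbit r O}.ncard = (Fintype.card X + 2).choose 3 ↔
      IsBraided r) := by
  classical
  obtain ⟨hinv, hlb, hrb, hsq⟩ := hqb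
  have hl : ∀ x : X, Function.Injective fun y => (r (x, y)).1 := fun x => (hlb x).injective
  have hr2 : ∀ x : X, Function.Injective fun y => (r (y, x)).2 := fun x => (hrb x).injective
  have hfA : Function.Involutive (r12 r) := hA_invol hinv
  have hfB : Function.Involutive (r23 r) := hB_invol hinv
  have hfA' : ∀ p, r12 r (r12 r p) = p := hfA
  have hfB' : ∀ p, r23 r (r23 r p) = p := hfB
  set n := Fintype.card X with hn
  letI s : Setoid (X × X × X) := ⟨QBSAux.srel (r12 r) (r23 r), QBSAux.srel_equiv _ _⟩
  haveI : Fintype (Quotient s) := Fintype.ofFinite _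
  set N := Fintype.card (Quotient s) with hN
  -- identify the set of orbits with the quotient
  have hcardO : {O : Set (X × X × X) | IsDOrbit r O}.ncard = N := by
    have wd : ∀ a b : X × X × X, QBSAux.srel (r12 r) (r23 r) a b →
        {c | QBSAux.srel (r12 r) (r23 r) a c} = {c | QBSAux.srel (r12 r) (r23 r) b c} := by
      intro a b hab
      ext c
      exact ⟨fun h => (QBSAux.srel_equiv _ _).trans ((QBSAux.srel_equiv _ _).symm hab) h,
        fun h => (QBSAux.srel_equiv _ _).trans hab h⟩
    set Φ : Quotient s → Set (X × X × X) :=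
      Quotient.lift (fun a => {c | QBSAux.srel (r12 r) (r23 r) a c}) wd with hPhi
    have hinj : Function.Injective Φ := by
      intro q1 q2
      induction q1 using Quotient.ind
      induction q2 using Quotient.ind
      rename_i a b
      intro h
      have hb : b ∈ Φ (Quotient.mk s b) := (QBSAux.srel_equiv (r12 r) (r23 r)).refl b
      rw [← h] at hb
      exact Quotient.sound hb
    have hrange : Set.range Φ = {O : Set (X × X × X) | IsDOrbit r O} := by
      ext O
      constructor
      · rintro ⟨q, rfl⟩
        induction q using Quotient.ind
        rename_i a
        exact ⟨a, rfl⟩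
      · rintro ⟨a, rfl⟩
        exact ⟨Quotient.mk s a, rfl⟩
    rw [← hrange, ← Nat.card_coe_set_eq, Nat.card_congr (Equiv.ofInjective Φ hinj).symm,
      Nat.card_eq_fintype_card]
  -- fibers of the quotient map are the orbit classes
  have fib : ∀ a : X × X × X,
      (Finset.univ.filter fun y => Quotient.mk s y = Quotient.mk s a)
        = QBSAux.cls (r12 r) (r23 r) a := by
    intro a
    ext y
    simp only [Finset.mem_filter, Finset.mem_univ, true_and, QBSAux.mem_cls]
    constructor
    · intro h
      exact (QBSAux.srel_equiv (r12 r) (r23 r)).symm (Quotient.exact h)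
    · intro h
      exact Quotient.sound ((QBSAux.srel_equiv (r12 r) (r23 r)).symm h)
  set W : Quotient s → ℕ := fun q =>
    2 * (Finset.univ.filter fun y => Quotient.mk s y = q).card
    + 3 * ((Finset.univ.filter fun y : X × X × X => r12 r y = y).filter
        fun y => Quotient.mk s y = q).card
    + 3 * ((Finset.univ.filter fun y : X × X × X => r23 r y = y).filter
        fun y => Quotient.mk s y = q).card
    + 4 * ((Finset.univ.filter fun y : X × X × X => r12 r y = y ∧ r23 r y = y).filter
        fun y => Quotient.mk s y = q).card with hW
  have hWa : ∀ a : X × X × X, W (Quotient.mk s a) = QBSAux.wgt (r12 r) (r23 r) a := by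
    intro a
    rw [hW]
    simp only
    rw [Finset.filter_comm]
    rw [fib a]
    rw [Finset.filter_comm]
    rw [fib a]
    rw [Finset.filter_comm]
    rw [fib a]
    simp only [QBSAux.wgt]
    congr
  have hsum : ∑ q : Quotient s, W q
      = 2 * (n * (n * n)) + 3 * (n * n) + 3 * (n * n) + 4 * n := by
    rw [hW]
    simp only
    rw [Finset.sum_add_distrib, Finset.sum_add_distrib, Finset.sum_add_distrib,
      ← Finset.mul_sum, ← Finset.mul_sum, ← Finset.mul_sum, ← Finset.mul_sum]
    rw [← Finset.card_eq_sum_card_fiberwise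
        (f := fun y : X × X × X => Quotient.mk s y) (fun x _ => Finset.mem_univ _),
      ← Finset.card_eq_sum_card_fiberwise
        (f := fun y : X × X × X => Quotient.mk s y) (fun x _ => Finset.mem_univ _),
      ← Finset.card_eq_sum_card_fiberwise
        (f := fun y : X × X × X => Quotient.mk s y) (fun x _ => Finset.mem_univ _),
      ← Finset.card_eq_sum_card_fiberwise
        (f := fun y : X × X × X => Quotient.mk s y) (fun x _ => Finset.mem_univ _)]
    rw [Finset.card_univ, Fintype.card_prod, Fintype.card_prod,
      cardFixA hl hsq, cardFixB hl hsq, cardBoth hl hsq]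
  have hmain := QBSAux.main_pt hfA hfB (cHA hl hsq) (cHB hl hr2 hsq)
      (cHC hl hsq) (cHC' hl hr2 hsq)
  have hWge : ∀ q : Quotient s, 12 ≤ W q := by
    intro q
    obtain ⟨a, rfl⟩ := Quotient.exists_rep q
    rw [hWa]
    exact (hmain a).1
  have h6 : 12 * Nat.choose (n + 2) 3
      = 2 * (n * (n * n)) + 3 * (n * n) + 3 * (n * n) + 4 * n := by
    rw [show (12 : ℕ) = 2 * 6 from rfl, Nat.mul_assoc, choose3_aux n]
    ring
  have hsum' : ∑ q : Quotient s, W q = 12 * Nat.choose (n + 2) 3 := by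
    rw [hsum, h6]
  have hsumconst : ∑ _q : Quotient s, (12 : ℕ) = 12 * N := by
    rw [Finset.sum_const, Finset.card_univ, smul_eq_mul, hN, Nat.mul_comm]
  have hbound : N ≤ Nat.choose (n + 2) 3 := by
    have h1 : 12 * N ≤ 12 * Nat.choose (n + 2) 3 := by
      calc 12 * N = ∑ _q : Quotient s, (12 : ℕ) := hsumconst.symm
        _ ≤ ∑ q : Quotient s, W q := Finset.sum_le_sum fun q _ => hWge q
        _ = 12 * Nat.choose (n + 2) 3 := hsum'
    exact Nat.le_of_mul_le_mul_left h1 (by norm_num)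
  refine ⟨hcardO ▸ hbound, ?_⟩
  rw [hcardO]
  constructor
  · -- equality implies braided
    intro hEq
    have hall : ∀ q : Quotient s, W q = 12 := by
      by_contra hc
      push_neg at hc
      obtain ⟨q0, hq0⟩ := hc
      have hlt : ∑ _q : Quotient s, (12 : ℕ) < ∑ q : Quotient s, W q :=
        Finset.sum_lt_sum (fun i _ => hWge i)
          ⟨q0, Finset.mem_univ _, lt_of_le_of_ne (hWge q0) (Ne.symm hq0)⟩
      rw [hsumconst, hsum', hEq] at hlt
      exact lt_irrefl _ hlt
    have hw12 : ∀ a, QBSAux.wgt (r12 r) (r23 r) a = 12 := fun a => by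
      rw [← hWa]
      exact hall _
    have hR3 : ∀ y, r12 r (r23 r (r12 r (r23 r (r12 r (r23 r y))))) = y := fun y =>
      (hmain y).2.1 (hw12 y)
    funext y
    show r12 r (r23 r (r12 r y)) = r23 r (r12 r (r23 r y))
    have e1 : r23 r (r12 r (r23 r (r12 r (r23 r y)))) = r12 r y :=
      hfA.injective ((hR3 y).trans (hfA' y).symm)
    have e2 : r12 r (r23 r (r12 r (r23 r y))) = r23 r (r12 r y) :=
      hfB.injective (e1.trans (hfB' (r12 r y)).symm)
    have e3 : r23 r (r12 r (r23 r y)) = r12 r (r23 r (r12 r y)) :=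
      hfA.injective (e2.trans (hfA' (r23 r (r12 r y))).symm)
    exact e3.symm
  · -- braided implies equality
    intro hbr
    have hp : ∀ y, r12 r (r23 r (r12 r y)) = r23 r (r12 r (r23 r y)) := fun y =>
      congrFun hbr y
    have hR3 : ∀ y, r12 r (r23 r (r12 r (r23 r (r12 r (r23 r y))))) = y := by
      intro y
      rw [hp, hfB', hfA', hfB']
    have hw12 : ∀ a, QBSAux.wgt (r12 r) (r23 r) a = 12 := fun a =>
      (hmain a).2.2 (fun y => hR3 y)
    have hq : ∀ q : Quotient s, W q = 12 := by
      intro q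
      obtain ⟨a, rfl⟩ := Quotient.exists_rep q
      rw [hWa]
      exact hw12 a
    have h2 : 12 * N = 12 * Nat.choose (n + 2) 3 := by
      calc 12 * N = ∑ _q : Quotient s, (12 : ℕ) := hsumconst.symm
        _ = ∑ q : Quotient s, W q := Finset.sum_congr rfl fun q _ => (hq q).symm
        _ = 12 * Nat.choose (n + 2) 3 := hsum'
    exact Nat.eq_of_mul_eq_mul_left (by norm_num) h2
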